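/- Let T ⊆ V with w(T) > W_L and |T| ≤ F_L, and set r = w(T) − W_L. Suppose there exist a feasible partition π of V and a node i ∈ T such that, writing V_c for the part of π containing i, equality holds: w_i + Σ_{j ∈ (T∖{i}) ∩ V_c} w_j + Σ_{j ∈ (V∖T) ∩ V_c} (w_j + r) = w(T). Then |T| ≥ F_L − 1. -/

import Mathlib

/-- A feasible partition of the node set `V` into `k` parts: every part is nonempty,
parts are pairwise disjoint, their union is `V`, the sizes of any two parts differ by
at most one, and the weight of every part lies between `WL` and `WU`. -/
def IsFeasiblePartition {α : Type*} [DecidableEq α] (V : Finset α) (w : α → ℝ)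
    (k : ℕ) (WL WU : ℝ) (P : Fin k → Finset α) : Prop :=
  (∀ c, (P c).Nonempty) ∧
  (∀ c c', c ≠ c' → Disjoint (P c) (P c')) ∧
  Finset.univ.biUnion P = V ∧
  (∀ c c', (P c).card ≤ (P c').card + 1) ∧
  (∀ c, WL ≤ ∑ v ∈ P c, w v ∧ ∑ v ∈ P c, w v ≤ WU)

/-- if a feasible partition and a node `i ∈ T` attain equality in the
`(T,i)`-Weight-Lowerbound inequality, then `|T| ≥ F_L − 1` where `F_L = ⌊n/k⌋`. -/
theorem stmt_6 {α : Type*} [DecidableEq α] (V : Finset α) (w : α → ℝ)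
    (k : ℕ) (WL WU : ℝ)
    (hw : ∀ v ∈ V, 0 < w v) (hk : 2 ≤ k) (hWLU : 0 ≤ WL) (hWL : WL ≤ WU)
    (T : Finset α) (hT : T ⊆ V) (hwT : WL < ∑ v ∈ T, w v)
    (hTcard : T.card ≤ V.card / k)
    (P : Fin k → Finset α)
    (hfeas : IsFeasiblePartition V w k WL WU P)
    (i : α) (hi : i ∈ T) (c : Fin k) (hic : i ∈ P c)
    (heq : w i + ∑ j ∈ (T.erase i) ∩ P c, w j
        + ∑ j ∈ (V \ T) ∩ P c, (w j + ((∑ v ∈ T, w v) - WL))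
        = ∑ v ∈ T, w v) :
    V.card / k - 1 ≤ T.card := by
  obtain ⟨hne, hdisj, huniv, hbal, hWbound⟩ := hfeas
  set r : ℝ := (∑ v ∈ T, w v) - WL with hr
  have hrpos : 0 < r := by simp only [hr]; linarith
  have hPcV : P c ⊆ V := by
    intro x hx
    rw [← huniv]
    exact Finset.mem_biUnion.mpr ⟨c, Finset.mem_univ c, hx⟩
  -- decompose P c into T ∩ P c and (V \ T) ∩ P c
  have hunion : (T ∩ P c) ∪ ((V \ T) ∩ P c) = P c := by
    ext x
    simp only [Finset.mem_union, Finset.mem_inter, Finset.mem_sdiff]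
    constructor
    · rintro (⟨_, h⟩ | ⟨_, h⟩) <;> exact h
    · intro hx
      by_cases hxT : x ∈ T
      · exact Or.inl ⟨hxT, hx⟩
      · exact Or.inr ⟨⟨hPcV hx, hxT⟩, hx⟩
  have hdisj2 : Disjoint (T ∩ P c) ((V \ T) ∩ P c) := by
    rw [Finset.disjoint_left]
    intro x hx hy
    simp only [Finset.mem_inter, Finset.mem_sdiff] at hx hy
    exact hy.1.2 hx.1
  -- rewrite heq
  have hTi : w i + ∑ j ∈ (T.erase i) ∩ P c, w j = ∑ j ∈ T ∩ P c, w j := by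
    have he : (T ∩ P c).erase i = (T.erase i) ∩ P c := by
      ext x
      simp only [Finset.mem_erase, Finset.mem_inter]
      tauto
    rw [← he, Finset.add_sum_erase _ _ (Finset.mem_inter.mpr ⟨hi, hic⟩)]
  have hsum2 : ∑ j ∈ (V \ T) ∩ P c, (w j + r)
      = ∑ j ∈ (V \ T) ∩ P c, w j + ((V \ T) ∩ P c).card * r := by
    rw [Finset.sum_add_distrib, Finset.sum_const, nsmul_eq_mul]
  have hPcsum : ∑ j ∈ T ∩ P c, w j + ∑ j ∈ (V \ T) ∩ P c, w j = ∑ j ∈ P c, w j := by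
    rw [← Finset.sum_union hdisj2, hunion]
  have hkey : ∑ j ∈ P c, w j + ((V \ T) ∩ P c).card * r = ∑ v ∈ T, w v := by
    rw [← hPcsum]
    rw [hsum2, hTi] at heq
    linarith
  -- m ≤ 1
  have hm1 : ((V \ T) ∩ P c).card ≤ 1 := by
    have hWLle : WL ≤ ∑ j ∈ P c, w j := (hWbound c).1
    have : (((V \ T) ∩ P c).card : ℝ) * r ≤ r := by
      have : (∑ v ∈ T, w v) - WL = r := rfl
      linarith
    have hcast : (((V \ T) ∩ P c).card : ℝ) ≤ 1 := by
      have := (mul_le_mul_iff_left₀ hrpos).mp (by linarith : (((V \ T) ∩ P c).card : ℝ) * r ≤ 1 * r)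
      linarith
    exact_mod_cast hcast
  -- card decomposition
  have hcardPc : (P c).card = (T ∩ P c).card + ((V \ T) ∩ P c).card := by
    have := Finset.card_union_of_disjoint hdisj2
    rw [hunion] at this
    exact this
  -- lower bound on |P c|
  have hcards : ∑ c' : Fin k, (P c').card = V.card := by
    rw [← huniv, Finset.card_biUnion]
    intro x _ y _ hxy
    exact hdisj x y hxy
  have hlow : V.card / k ≤ (P c).card := by
    by_contra h
    push_neg at h
    have h1 : (P c).card + 1 ≤ V.card / k := h
    have h2 : ∑ c' ∈ Finset.univ.erase c, (P c').card ≤ (k - 1) * ((P c).card + 1) := by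
      calc ∑ c' ∈ Finset.univ.erase c, (P c').card
          ≤ ∑ _c' ∈ Finset.univ.erase c, ((P c).card + 1) :=
            Finset.sum_le_sum (fun c' _ => hbal c' c)
        _ = (Finset.univ.erase c).card * ((P c).card + 1) := by
            rw [Finset.sum_const, smul_eq_mul]
        _ = (k - 1) * ((P c).card + 1) := by
            rw [Finset.card_erase_of_mem (Finset.mem_univ c), Finset.card_univ,
              Fintype.card_fin]
    have h3 : V.card = (P c).card + ∑ c' ∈ Finset.univ.erase c, (P c').card := by
      rw [← hcards]
      exact (Finset.add_sum_erase _ _ (Finset.mem_univ c)).symm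
    have hsub : (k - 1) * ((P c).card + 1) = k * ((P c).card + 1) - ((P c).card + 1) :=
      Nat.sub_one_mul k ((P c).card + 1)
    have h4 : k * ((P c).card + 1) ≤ k * (V.card / k) := Nat.mul_le_mul_left k h1
    have h5 : k * (V.card / k) ≤ V.card := Nat.mul_div_le V.card k
    have h6 : (P c).card + 1 ≤ k * ((P c).card + 1) :=
      Nat.le_mul_of_pos_left _ (by omega)
    omega
  have hTc : (T ∩ P c).card ≤ T.card := Finset.card_le_card Finset.inter_subset_left
  omega
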